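/- Let T be a tree on the vertex set {0,1,…,n}. Then there exist complex weights a'_{ij} ∈ ℂ with a'_{ij} = a'_{ji} for every edge {i,j} of T, and constants ω_1,…,ω_n ∈ ℂ, such that the system ω_i − Σ_{j ∈ N_T(i)} a'_{ij}(x_i/x_j − x_j/x_i) = 0, i = 1,…,n (with x_0 = 1), has exactly 2^n solutions x ∈ (ℂ*)^n. -/

import Mathlib

open SimpleGraph Finset

private lemma flow_vanish_aux {n : ℕ} (T : SimpleGraph (Fin (n + 1))) [DecidableRel T.Adj]
    (hT : T.IsTree) (f : Fin (n + 1) → Fin (n + 1) → ℂ)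
    (hanti : ∀ i j, f i j = - f j i)
    (hdiv : ∀ i, i ≠ 0 → ∑ j ∈ T.neighborFinset i, f i j = 0)
    {u v : Fin (n + 1)} (huv : T.Adj u v)
    (h0 : ¬ (T.deleteEdges {s(u, v)}).Reachable 0 u) : f u v = 0 := by
  classical
  set G' := T.deleteEdges {s(u, v)} with hG'
  have hbr : ¬ G'.Reachable u v := by
    have hb := (isAcyclic_iff_forall_edge_isBridge.mp hT.IsAcyclic) (T.mem_edgeSet.mpr huv)
    exact isBridge_iff.mp hb
  set C : Finset (Fin (n + 1)) := univ.filter (fun w => G'.Reachable w u) with hC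
  have hmemC : ∀ w, w ∈ C ↔ G'.Reachable w u := by intro w; simp [hC]
  have huC : u ∈ C := (hmemC u).mpr (Reachable.refl u)
  have hvC : v ∉ C := fun h => hbr ((hmemC v).mp h).symm
  have h0C : (0 : Fin (n + 1)) ∉ C := fun h => h0 ((hmemC 0).mp h)
  have hcross : ∀ w ∈ C, ∀ j, T.Adj w j → j ∉ C → w = u ∧ j = v := by
    intro w hw j hadj hj
    by_cases he : s(w, j) = s(u, v)
    · rcases Sym2.eq_iff.mp he with ⟨rfl, rfl⟩ | ⟨rfl, rfl⟩
      · exact ⟨rfl, rfl⟩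
      · exact absurd hw hvC
    · have hadj' : G'.Adj w j := by
        rw [hG', deleteEdges_adj]
        exact ⟨hadj, by simpa using he⟩
      exact absurd ((hmemC j).mpr (hadj'.symm.reachable.trans ((hmemC w).mp hw))) hj
  -- split each divergence into inside-C and outside-C parts
  have hS : ∑ w ∈ C, ∑ j ∈ T.neighborFinset w, f w j = 0 := by
    refine Finset.sum_eq_zero fun w hw => hdiv w ?_
    rintro rfl; exact h0C hw
  have hsplit : ∀ w, ∑ j ∈ T.neighborFinset w, f w j
      = ∑ j ∈ (T.neighborFinset w).filter (· ∈ C), f w j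
        + ∑ j ∈ (T.neighborFinset w).filter (· ∉ C), f w j :=
    fun w => (Finset.sum_filter_add_sum_filter_not _ _ _).symm
  -- the inside part cancels by antisymmetry
  have hA : ∑ w ∈ C, ∑ j ∈ (T.neighborFinset w).filter (· ∈ C), f w j = 0 := by
    rw [Finset.sum_sigma' C (fun w => (T.neighborFinset w).filter (· ∈ C))
      (fun w j => f w j)]
    refine Finset.sum_involution (fun a _ => ⟨a.2, a.1⟩) ?_ ?_ ?_ ?_
    · intro a ha
      rw [hanti a.1 a.2]; ring
    · intro a ha _ h
      have hmem := Finset.mem_sigma.mp ha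
      have hadj : T.Adj a.1 a.2 :=
        (Finset.mem_filter.mp hmem.2).elim fun h1 _ => (mem_neighborFinset T a.1 a.2).mp h1
      have h12 : a.1 = a.2 := by
        have := congrArg Sigma.fst h
        simpa using this.symm
      exact T.irrefl (h12 ▸ hadj)
    · intro a ha
      have hmem := Finset.mem_sigma.mp ha
      obtain ⟨h1, h2⟩ := Finset.mem_filter.mp hmem.2
      rw [mem_neighborFinset] at h1
      refine Finset.mem_sigma.mpr ⟨h2, Finset.mem_filter.mpr ⟨?_, hmem.1⟩⟩
      rw [mem_neighborFinset]
      exact h1.symm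
    · intro a ha
      rfl
  -- the outside part is exactly f u v
  have hB : ∑ w ∈ C, ∑ j ∈ (T.neighborFinset w).filter (· ∉ C), f w j = f u v := by
    have hinner2 : ∀ w ∈ C, ∑ j ∈ (T.neighborFinset w).filter (· ∉ C), f w j
        = if w = u then f u v else 0 := by
      intro w hw
      by_cases hwu : w = u
      · subst hwu
        have hset : (T.neighborFinset w).filter (· ∉ C) = {v} := by
          ext j
          simp only [mem_filter, mem_neighborFinset, Finset.mem_singleton]
          constructor
          · rintro ⟨hadj, hj⟩
            exact (hcross w hw j hadj hj).2
          · rintro rfl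
            exact ⟨huv, hvC⟩
        rw [hset]; simp
      · rw [if_neg hwu]
        refine Finset.sum_eq_zero fun j hj => ?_
        simp only [mem_filter, mem_neighborFinset] at hj
        exact absurd (hcross w hw j hj.1 hj.2).1 hwu
    rw [Finset.sum_congr rfl hinner2, Finset.sum_ite_eq' C u (fun _ => f u v), if_pos huC]
  calc f u v = 0 + f u v := by ring
  _ = ∑ w ∈ C, ∑ j ∈ (T.neighborFinset w).filter (· ∈ C), f w j
        + ∑ w ∈ C, ∑ j ∈ (T.neighborFinset w).filter (· ∉ C), f w j := by rw [hA, hB]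
  _ = ∑ w ∈ C, ∑ j ∈ T.neighborFinset w, f w j := by
        rw [← Finset.sum_add_distrib]
        exact Finset.sum_congr rfl fun w _ => (hsplit w).symm
  _ = 0 := hS

private lemma flow_vanish {n : ℕ} (T : SimpleGraph (Fin (n + 1))) [DecidableRel T.Adj]
    (hT : T.IsTree) (f : Fin (n + 1) → Fin (n + 1) → ℂ)
    (hanti : ∀ i j, f i j = - f j i)
    (hdiv : ∀ i, i ≠ 0 → ∑ j ∈ T.neighborFinset i, f i j = 0)
    {u v : Fin (n + 1)} (huv : T.Adj u v) : f u v = 0 := by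
  classical
  have hbr : ¬ (T.deleteEdges {s(u, v)}).Reachable u v := by
    have hb := (isAcyclic_iff_forall_edge_isBridge.mp hT.IsAcyclic) (T.mem_edgeSet.mpr huv)
    exact isBridge_iff.mp hb
  have key : ∀ (a b : Fin (n + 1)) (p : T.Walk a b),
      (T.deleteEdges {s(u, v)}).Reachable a b ∨
      (T.deleteEdges {s(u, v)}).Reachable a u ∨
      (T.deleteEdges {s(u, v)}).Reachable a v := by
    intro a b p
    induction p with
    | nil => exact Or.inl (Reachable.refl _)
    | cons h q ih =>
      rename_i a' c' b'
      by_cases he : s(a', c') = s(u, v)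
      · rcases Sym2.eq_iff.mp he with ⟨rfl, rfl⟩ | ⟨rfl, rfl⟩
        · exact Or.inr (Or.inl (Reachable.refl _))
        · exact Or.inr (Or.inr (Reachable.refl _))
      · have hadj' : (T.deleteEdges {s(u, v)}).Adj a' c' := by
          rw [deleteEdges_adj]
          exact ⟨h, by simpa using he⟩
        rcases ih with h1 | h1 | h1
        · exact Or.inl (hadj'.reachable.trans h1)
        · exact Or.inr (Or.inl (hadj'.reachable.trans h1))
        · exact Or.inr (Or.inr (hadj'.reachable.trans h1))
  have hreach : ∀ w, (T.deleteEdges {s(u, v)}).Reachable w u ∨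
      (T.deleteEdges {s(u, v)}).Reachable w v := by
    intro w
    obtain ⟨p⟩ := hT.isConnected.preconnected w u
    rcases key w u p with h1 | h1 | h1
    · exact Or.inl h1
    · exact Or.inl h1
    · exact Or.inr h1
  rcases hreach 0 with h0u | h0v
  · -- use the aux lemma with u,v swapped
    have h0v' : ¬ (T.deleteEdges {s(v, u)}).Reachable 0 v := by
      rw [Sym2.eq_swap]
      intro h
      exact hbr (h0u.symm.trans h)
    have := flow_vanish_aux T hT f hanti hdiv huv.symm h0v'
    rw [hanti]
    simp [this]
  · exact flow_vanish_aux T hT f hanti hdiv huv (fun h => hbr (h.symm.trans h0v))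

/-- Let `T` be a tree on `{0,1,…,n}`.  Then there exist symmetric complex weights `a_{ij}` on the
edges of `T` and constants `ω_1,…,ω_n ∈ ℂ` such that the algebraic Kuramoto system
`ω_i - ∑_{j ∈ N_T(i)} a_{ij}(x_i/x_j - x_j/x_i) = 0`, `i = 1,…,n` (with `x_0 = 1`), has exactly
`2^n` solutions `x ∈ (ℂ*)^n`. -/
theorem tree_system_attains_bound (n : ℕ) (T : SimpleGraph (Fin (n + 1)))
    [DecidableRel T.Adj] (hT : T.IsTree) :
    ∃ a : Fin (n + 1) → Fin (n + 1) → ℂ, (∀ i j, T.Adj i j → a i j = a j i) ∧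
      ∃ ω : Fin (n + 1) → ℂ,
        Set.ncard {x : Fin (n + 1) → ℂ |
            x 0 = 1 ∧ (∀ i, x i ≠ 0) ∧
            ∀ i : Fin (n + 1), i ≠ 0 →
              ω i - ∑ j ∈ T.neighborFinset i, a i j * (x i / x j - x j / x i) = 0} =
          2 ^ n := by
  classical
  refine ⟨fun _ _ => 1, fun _ _ _ => rfl, fun _ => 0, ?_⟩
  set t : Fin (n + 1) → Finset ℂ := fun i => if i = 0 then {1} else {1, -1} with ht
  have hset : {x : Fin (n + 1) → ℂ |
      x 0 = 1 ∧ (∀ i, x i ≠ 0) ∧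
      ∀ i : Fin (n + 1), i ≠ 0 →
        (0 : ℂ) - ∑ j ∈ T.neighborFinset i, 1 * (x i / x j - x j / x i) = 0}
      = ↑(Fintype.piFinset t) := by
    ext x
    simp only [Set.mem_setOf_eq, Finset.mem_coe, Fintype.mem_piFinset]
    constructor
    · rintro ⟨hx0, hne, heqs⟩
      -- from the equations, every edge difference vanishes
      have hdiv : ∀ i, i ≠ 0 →
          ∑ j ∈ T.neighborFinset i, (x i / x j - x j / x i) = 0 := by
        intro i hi
        have h := heqs i hi
        rw [zero_sub, neg_eq_zero] at h
        simpa using h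
      have hedge : ∀ u v, T.Adj u v → x u ^ 2 = x v ^ 2 := by
        intro u v huv
        have hv := flow_vanish T hT (fun i j => x i / x j - x j / x i)
          (fun i j => by ring) hdiv huv
        have h1 : x u / x v = x v / x u := sub_eq_zero.mp hv
        rw [div_eq_div_iff (hne v) (hne u)] at h1
        rw [sq, sq]; exact h1
      have key : ∀ (w w' : Fin (n + 1)) (p : T.Walk w w'), x w ^ 2 = x w' ^ 2 := by
        intro w w' p
        induction p with
        | nil => rfl
        | cons h q ih => exact (hedge _ _ h).trans ih
      have hsq : ∀ i, x i ^ 2 = 1 := by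
        intro i
        obtain ⟨p⟩ := hT.isConnected.preconnected 0 i
        have := key 0 i p
        rw [hx0] at this
        rw [← this]; ring
      intro i
      by_cases hi : i = 0
      · subst hi; simp [ht, hx0]
      · have h2 : (x i - 1) * (x i + 1) = 0 := by linear_combination hsq i
        rcases mul_eq_zero.mp h2 with h | h
        · simp [ht, hi, sub_eq_zero.mp h]
        · simp [ht, hi, eq_neg_of_add_eq_zero_left h]
    · intro hmem
      have hx0 : x 0 = 1 := by have := hmem 0; simpa [ht] using this
      have hsq : ∀ i, x i ^ 2 = 1 := by
        intro i
        have h := hmem i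
        by_cases hi : i = 0
        · subst hi; rw [hx0]; ring
        · simp only [ht, if_neg hi, Finset.mem_insert, Finset.mem_singleton] at h
          rcases h with h | h <;> rw [h] <;> ring
      have hne : ∀ i, x i ≠ 0 := by
        intro i h
        have := hsq i
        rw [h] at this
        simp at this
      refine ⟨hx0, hne, fun i hi => ?_⟩
      rw [sub_eq_zero]
      symm
      refine Finset.sum_eq_zero fun j _ => ?_
      rw [one_mul, sub_eq_zero, div_eq_div_iff (hne j) (hne i)]
      linear_combination hsq i - hsq j
  show Set.ncard {x : Fin (n + 1) → ℂ |
      x 0 = 1 ∧ (∀ i, x i ≠ 0) ∧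
      ∀ i : Fin (n + 1), i ≠ 0 →
        (0 : ℂ) - ∑ j ∈ T.neighborFinset i, 1 * (x i / x j - x j / x i) = 0} = 2 ^ n
  rw [hset, Set.ncard_coe_finset, Fintype.card_piFinset]
  have hca : ∀ i, (t i).card = if i = 0 then 1 else 2 := by
    intro i
    by_cases hi : i = 0
    · simp [ht, hi]
    · rw [ht]
      simp only [if_neg hi]
      rw [Finset.card_insert_of_notMem (by norm_num), Finset.card_singleton]
  rw [Finset.prod_congr rfl fun i _ => hca i, Fin.prod_univ_succ]
  simp [Fin.succ_ne_zero, Finset.prod_const]
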